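/- Let G be a tournament and let J be the backedge graph of G under some numbering (v_1,…,v_n). Then: (1) if G has a pure pair of order t, then J has a pure pair (in the graph sense) of order at least t/2; and (2) if J has a pure pair (in the graph sense) of order t, then G has a pure pair of order at least t/2. -/

import Mathlib

/-- A tournament on vertex set `Fin n`. -/
structure Tournament (n : ℕ) where
  adj : Fin n → Fin n → Prop
  irrefl : ∀ v, ¬ adj v v
  total : ∀ u v : Fin n, u ≠ v → (adj u v ↔ ¬ adj v u)

namespace Tournament

/-- `G` contains `H` as a subtournament. -/
def Contains {n m : ℕ} (G : Tournament n) (H : Tournament m) : Prop :=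
  ∃ f : Fin m → Fin n, Function.Injective f ∧ ∀ u v, H.adj u v ↔ G.adj (f u) (f v)

/-- `G` has a pure pair of order at least `t`. -/
def HasPurePair {n : ℕ} (G : Tournament n) (t : ℝ) : Prop :=
  ∃ A B : Finset (Fin n), Disjoint A B ∧ (∀ a ∈ A, ∀ b ∈ B, G.adj a b) ∧
    t ≤ A.card ∧ t ≤ B.card

/-- The strong Erdős–Hajnal property for a tournament. -/
def StrongEH {m : ℕ} (H : Tournament m) : Prop :=
  ∃ c : ℝ, 0 < c ∧ ∀ (n : ℕ) (G : Tournament n), ¬ G.Contains H → 1 < n →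
    G.HasPurePair (c * n)

/-- The reverse tournament: all edges reversed. -/
def rev {n : ℕ} (G : Tournament n) : Tournament n where
  adj i j := G.adj j i
  irrefl v := G.irrefl v
  total u v h := by have := G.total v u (Ne.symm h); tauto

/-- Isomorphism of tournaments. -/
def Iso {n m : ℕ} (G : Tournament n) (H : Tournament m) : Prop :=
  ∃ e : Fin n ≃ Fin m, ∀ u v, G.adj u v ↔ H.adj (e u) (e v)

/-- The backedge graph of `H` under the numbering `σ`: position `i` carries the vertex `σ i`,
and positions `i < j` are adjacent iff the vertex `σ i` is adjacent from `σ j` in `H`. -/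
def backedge {m : ℕ} (H : Tournament m) (σ : Equiv.Perm (Fin m)) :
    SimpleGraph (Fin m) where
  Adj i j := (i < j ∧ H.adj (σ j) (σ i)) ∨ (j < i ∧ H.adj (σ i) (σ j))
  symm := by constructor; intro i j h; tauto
  loopless := by constructor; intro i h; rcases h with ⟨h, _⟩ | ⟨h, _⟩ <;> exact absurd h (lt_irrefl i)

/-- The number of backedges of the numbering `σ` of `H`
(the number of edges of the backedge graph). -/
noncomputable def backCount {m : ℕ} (H : Tournament m) (σ : Equiv.Perm (Fin m)) : ℕ :=
  Nat.card {p : Fin m × Fin m | p.1 < p.2 ∧ H.adj (σ p.2) (σ p.1)}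

end Tournament
/-- A pure pair of order at least `t` in a graph. -/
def GHasPurePair {n : ℕ} (G : SimpleGraph (Fin n)) (t : ℝ) : Prop :=
  ∃ A B : Finset (Fin n), Disjoint A B ∧
    ((∀ a ∈ A, ∀ b ∈ B, ¬ G.Adj a b) ∨ (∀ a ∈ A, ∀ b ∈ B, G.Adj a b)) ∧
    t ≤ A.card ∧ t ≤ B.card

open Finset

lemma rank_exists {n : ℕ} (S : Finset (Fin n)) (m : ℕ) (h1 : 1 ≤ m) (h2 : m ≤ S.card) :
    ∃ x ∈ S, (S.filter (fun y => y ≤ x)).card = m := by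
  classical
  set g : Fin n → ℕ := fun x => (S.filter (fun y => y ≤ x)).card with hg
  have hmono : ∀ x ∈ S, ∀ y ∈ S, x < y → g x < g y := by
    intro x hx y hy hxy
    apply Finset.card_lt_card
    constructor
    · intro z hz
      simp only [mem_filter] at *
      exact ⟨hz.1, hz.2.trans hxy.le⟩
    · intro hsub
      have := hsub (mem_filter.mpr ⟨hy, le_refl y⟩)
      simp only [mem_filter] at this
      exact absurd this.2 (not_le.mpr hxy)
  have hinj : Set.InjOn g S := by
    intro x hx y hy hxy
    by_contra hne
    rcases lt_or_gt_of_ne hne with h | h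
    · exact absurd hxy (Nat.ne_of_lt (hmono x hx y hy h))
    · exact absurd hxy.symm (Nat.ne_of_lt (hmono y hy x hx h))
  have himg : S.image g ⊆ Finset.Icc 1 S.card := by
    intro v hv
    simp only [mem_image] at hv
    obtain ⟨x, hx, rfl⟩ := hv
    simp only [Finset.mem_Icc]
    constructor
    · have : x ∈ S.filter (fun y => y ≤ x) := mem_filter.mpr ⟨hx, le_refl x⟩
      exact Finset.card_pos.mpr ⟨x, this⟩
    · exact Finset.card_le_card (filter_subset _ _)
  have hcard : (S.image g).card = S.card := Finset.card_image_of_injOn hinj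
  have heq : S.image g = Finset.Icc 1 S.card := by
    apply Finset.eq_of_subset_of_card_le himg
    simp [hcard, Nat.card_Icc]
  have hm : m ∈ S.image g := by
    rw [heq]; simp only [Finset.mem_Icc]; omega
  simp only [mem_image] at hm
  obtain ⟨x, hx, hgx⟩ := hm
  exact ⟨x, hx, hgx⟩

lemma median_split {n : ℕ} (A B : Finset (Fin n)) (t : ℕ) (hd : Disjoint A B)
    (hA : t ≤ A.card) (hB : t ≤ B.card) :
    ∃ X Y : Finset (Fin n), X ⊆ A ∧ Y ⊆ B ∧ t ≤ 2 * X.card ∧ t ≤ 2 * Y.card ∧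
      ((∀ i ∈ X, ∀ j ∈ Y, i < j) ∨ (∀ i ∈ X, ∀ j ∈ Y, j < i)) := by
  classical
  rcases Nat.eq_zero_or_pos t with rfl | ht
  · exact ⟨∅, ∅, empty_subset _, empty_subset _, by simp, by simp,
      Or.inl (by simp)⟩
  set m := (t + 1) / 2 with hm
  obtain ⟨x, hxA, hx1⟩ := rank_exists A m (by omega) (by omega)
  set X1 := A.filter (fun y => y ≤ x) with hX1
  set X2 := A.filter (fun y => x ≤ y) with hX2
  have hunion : X1 ∪ X2 = A := by
    ext z
    simp only [hX1, hX2, mem_union, mem_filter]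
    constructor
    · rintro (⟨h, _⟩ | ⟨h, _⟩) <;> exact h
    · intro hz
      rcases le_total z x with h | h
      · exact Or.inl ⟨hz, h⟩
      · exact Or.inr ⟨hz, h⟩
  have hinter : X1 ∩ X2 = {x} := by
    ext z
    simp only [hX1, hX2, mem_inter, mem_filter, mem_singleton]
    constructor
    · rintro ⟨⟨_, h1⟩, ⟨_, h2⟩⟩
      exact le_antisymm h1 h2
    · rintro rfl
      exact ⟨⟨hxA, le_refl _⟩, ⟨hxA, le_refl _⟩⟩
  have hsum : X1.card + X2.card = A.card + 1 := by
    have := Finset.card_union_add_card_inter X1 X2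
    rw [hunion, hinter] at this
    simpa using this.symm
  have hX2card : X2.card = A.card + 1 - m := by omega
  set Blt := B.filter (fun y => y < x) with hBlt
  set Bgt := B.filter (fun y => x < y) with hBgt
  have hxB : x ∉ B := fun h => (Finset.disjoint_left.mp hd hxA) h
  have hBsum : Blt.card + Bgt.card = B.card := by
    rw [← Finset.card_union_of_disjoint]
    · congr 1
      ext z
      simp only [hBlt, hBgt, mem_union, mem_filter]
      constructor
      · rintro (⟨h, _⟩ | ⟨h, _⟩) <;> exact h
      · intro hz
        rcases lt_trichotomy z x with h | h | h
        · exact Or.inl ⟨hz, h⟩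
        · exact absurd (h ▸ hz) hxB
        · exact Or.inr ⟨hz, h⟩
    · rw [Finset.disjoint_left]
      intro z hz1 hz2
      simp only [hBlt, hBgt, mem_filter] at hz1 hz2
      exact absurd hz2.2 (not_lt.mpr hz1.2.le)
  have hm2 : 2 * m ≤ t + 1 ∧ t ≤ 2 * m := by omega
  by_cases hcase : t ≤ 2 * Bgt.card
  · refine ⟨X1, Bgt, filter_subset _ _, filter_subset _ _, by omega, hcase, Or.inl ?_⟩
    intro i hi j hj
    simp only [hX1, hBgt, mem_filter] at hi hj
    exact lt_of_le_of_lt hi.2 hj.2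
  · have : t ≤ 2 * Blt.card := by omega
    refine ⟨X2, Blt, filter_subset _ _, filter_subset _ _, by omega, this, Or.inr ?_⟩
    intro i hi j hj
    simp only [hX2, hBlt, mem_filter] at hi hj
    exact lt_of_lt_of_le hj.2 hi.2

lemma half_le {t c : ℕ} (h : t ≤ 2 * c) : (t : ℝ) / 2 ≤ (c : ℕ) := by
  rw [div_le_iff₀ (by norm_num : (0:ℝ) < 2)]
  exact_mod_cast (by omega : t ≤ c * 2)

/-- Pure pairs transfer, with a factor of two, between a tournament `G` and any backedge
graph `J` of `G`. -/
theorem purePair_transfer {n : ℕ} (G : Tournament n) (σ : Equiv.Perm (Fin n)) (t : ℕ) :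
    (G.HasPurePair (t : ℝ) → GHasPurePair (G.backedge σ) ((t : ℝ) / 2)) ∧
    (GHasPurePair (G.backedge σ) (t : ℝ) → G.HasPurePair ((t : ℝ) / 2)) := by
  classical
  constructor
  · rintro ⟨A, B, hAB, hadj, hA, hB⟩
    have hA' : t ≤ A.card := by exact_mod_cast hA
    have hB' : t ≤ B.card := by exact_mod_cast hB
    set A' := A.image σ.symm with hA'def
    set B' := B.image σ.symm with hB'def
    have hinj : Function.Injective (σ.symm : Fin n → Fin n) := σ.symm.injective
    have hd' : Disjoint A' B' := (Finset.disjoint_image hinj).mpr hAB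
    have hcA : A'.card = A.card := Finset.card_image_of_injective _ hinj
    have hcB : B'.card = B.card := Finset.card_image_of_injective _ hinj
    obtain ⟨X, Y, hXA, hYB, hX2, hY2, hor⟩ :=
      median_split A' B' t hd' (by omega) (by omega)
    have hmemA : ∀ i ∈ X, σ i ∈ A := by
      intro i hi
      have := hXA hi
      rw [hA'def, Finset.mem_image] at this
      obtain ⟨a, ha, rfl⟩ := this
      simpa using ha
    have hmemB : ∀ j ∈ Y, σ j ∈ B := by
      intro j hj
      have := hYB hj
      rw [hB'def, Finset.mem_image] at this
      obtain ⟨b, hb, rfl⟩ := this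
      simpa using hb
    have hdXY : Disjoint X Y := hd'.mono hXA hYB
    refine ⟨X, Y, hdXY, ?_, half_le hX2, half_le hY2⟩
    rcases hor with hlt | hgt
    · left
      intro i hi j hj hadj'
      have hij := hlt i hi j hj
      have hGadj : G.adj (σ i) (σ j) := hadj _ (hmemA i hi) _ (hmemB j hj)
      have hne : σ i ≠ σ j := fun h => (hij.ne (σ.injective h)).elim
      have := (G.total (σ i) (σ j) hne).mp hGadj
      rcases hadj' with ⟨_, h⟩ | ⟨h, _⟩
      · exact this h
      · exact absurd h (not_lt.mpr hij.le)
    · right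
      intro i hi j hj
      have hji := hgt i hi j hj
      exact Or.inr ⟨hji, hadj _ (hmemA i hi) _ (hmemB j hj)⟩
  · rintro ⟨A, B, hAB, hpure, hA, hB⟩
    have hA' : t ≤ A.card := by exact_mod_cast hA
    have hB' : t ≤ B.card := by exact_mod_cast hB
    obtain ⟨X, Y, hXA, hYB, hX2, hY2, hor⟩ := median_split A B t hAB hA' hB'
    have hdXY : Disjoint X Y := hAB.mono hXA hYB
    have hinj : Function.Injective (σ : Fin n → Fin n) := σ.injective
    have hcX : (X.image σ).card = X.card := Finset.card_image_of_injective _ hinj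
    have hcY : (Y.image σ).card = Y.card := Finset.card_image_of_injective _ hinj
    have hdimg : Disjoint (X.image σ) (Y.image σ) := (Finset.disjoint_image hinj).mpr hdXY
    rcases hpure with hno | hall
    · rcases hor with hlt | hgt
      · -- no edges, X < Y: G.adj (σ i) (σ j)
        refine ⟨X.image σ, Y.image σ, hdimg, ?_, by rw [hcX]; exact half_le hX2,
          by rw [hcY]; exact half_le hY2⟩
        intro a ha b hb
        rw [Finset.mem_image] at ha hb
        obtain ⟨i, hi, rfl⟩ := ha
        obtain ⟨j, hj, rfl⟩ := hb
        have hij := hlt i hi j hj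
        have hno' := hno i (hXA hi) j (hYB hj)
        have hne : σ i ≠ σ j := fun h => (hij.ne (σ.injective h)).elim
        have h1 : ¬ G.adj (σ j) (σ i) := fun h => hno' (Or.inl ⟨hij, h⟩)
        exact (G.total (σ i) (σ j) hne).mpr h1
      · -- no edges, Y < X: G.adj (σ j) (σ i), pair (Y, X)
        refine ⟨Y.image σ, X.image σ, hdimg.symm, ?_, by rw [hcY]; exact half_le hY2,
          by rw [hcX]; exact half_le hX2⟩
        intro b hb a ha
        rw [Finset.mem_image] at ha hb
        obtain ⟨i, hi, rfl⟩ := ha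
        obtain ⟨j, hj, rfl⟩ := hb
        have hji := hgt i hi j hj
        have hno' := hno i (hXA hi) j (hYB hj)
        have hne : σ j ≠ σ i := fun h => (hji.ne (σ.injective h)).elim
        have h1 : ¬ G.adj (σ i) (σ j) := fun h => hno' (Or.inr ⟨hji, h⟩)
        exact (G.total (σ j) (σ i) hne).mpr h1
    · rcases hor with hlt | hgt
      · -- all edges, X < Y: G.adj (σ j) (σ i), pair (Y, X)
        refine ⟨Y.image σ, X.image σ, hdimg.symm, ?_, by rw [hcY]; exact half_le hY2,
          by rw [hcX]; exact half_le hX2⟩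
        intro b hb a ha
        rw [Finset.mem_image] at ha hb
        obtain ⟨i, hi, rfl⟩ := ha
        obtain ⟨j, hj, rfl⟩ := hb
        have hij := hlt i hi j hj
        have hall' := hall i (hXA hi) j (hYB hj)
        rcases hall' with ⟨_, h⟩ | ⟨h, _⟩
        · exact h
        · exact absurd h (not_lt.mpr hij.le)
      · -- all edges, Y < X: G.adj (σ i) (σ j), pair (X, Y)
        refine ⟨X.image σ, Y.image σ, hdimg, ?_, by rw [hcX]; exact half_le hX2,
          by rw [hcY]; exact half_le hY2⟩
        intro a ha b hb
        rw [Finset.mem_image] at ha hb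
        obtain ⟨i, hi, rfl⟩ := ha
        obtain ⟨j, hj, rfl⟩ := hb
        have hji := hgt i hi j hj
        have hall' := hall i (hXA hi) j (hYB hj)
        rcases hall' with ⟨h, _⟩ | ⟨_, h⟩
        · exact absurd h (not_lt.mpr hji.le)
        · exact h
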